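/- Let H_a = (V, E_a) and H_b = (V, E_b) be hypergraphs with Col(H) = ∑_{e ∈ E} U_e. Then Col(H_a) ∩ Col(H_b) = Col(H_{a∧b}), where H_{a∧b} has edge set {e ∩ f : e ∈ E_a, f ∈ E_b, |e ∩ f| ≥ 2}. Consequently Col(H_{a∧b})^⊥ = Col(H_a)^⊥ + Col(H_b)^⊥. -/

import Mathlib

set_option linter.unusedSectionVars false
set_option maxHeartbeats 1000000

open Submodule Finset

variable {V : Type*} [Fintype V] [DecidableEq V]

/-- The set of nontrivial partitions `Π*(α)` of `α`, encoded as setoids different from `⊤`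
(the one-block partition). -/
def NontrivPart (α : Type*) := {P : Setoid α // P ≠ ⊤}

instance : Finite (Setoid V) :=
  Finite.of_injective (fun s : Setoid V => s.r)
    (fun _ _ h => Setoid.ext fun x y => iff_of_eq (congrFun (congrFun h x) y))

instance : Finite (NontrivPart V) := by unfold NontrivPart; infer_instance

noncomputable instance : Fintype (NontrivPart V) := Fintype.ofFinite _

/-- Restriction `P|_S` of a partition of `V` to a subset `S`: the partition of `S` whose blocks
are the nonempty intersections of blocks of `P` with `S`. -/
def restrictS (S : Set V) (P : Setoid V) : Setoid ↥S := Setoid.comap Subtype.val P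

open Classical in
/-- The indicator function `1_{S,π}`, an element of `ℝ^{Π*(V)}` equipped with its standard
(Euclidean) inner product. -/
noncomputable def ind (S : Set V) (π : Setoid ↥S) : EuclideanSpace ℝ (NontrivPart V) :=
  WithLp.toLp 2 (fun P : NontrivPart V => if restrictS S P.1 = π then 1 else 0)

/-- The subspace `U_S ⊆ ℝ^{Π*(V)}` spanned by the indicators `1_{S,π}` over nontrivial
partitions `π` of `S` (equal to `{0}` when `|S| ≤ 1`). -/
noncomputable def U (S : Set V) : Submodule ℝ (EuclideanSpace ℝ (NontrivPart V)) :=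
  Submodule.span ℝ {f | ∃ π : Setoid ↥S, π ≠ ⊤ ∧ f = ind S π}

/-- The column space `Col(H) = ∑_{e ∈ E} U_e` of a hypergraph with edge set `E`. -/
noncomputable def Col (E : Set (Set V)) : Submodule ℝ (EuclideanSpace ℝ (NontrivPart V)) :=
  ⨆ e ∈ E, U e

/-! ### Auxiliary constructions -/

section Aux

open Classical

instance finSetoidAux (α : Type*) [Finite α] : Finite (Setoid α) :=
  Finite.of_injective (fun s : Setoid α => s.r)
    (fun _ _ h => Setoid.ext fun x y => iff_of_eq (congrFun (congrFun h x) y))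

noncomputable instance (α : Type*) [Finite α] : Fintype (Setoid α) := Fintype.ofFinite _

/-- Support of a setoid: union of its non-singleton blocks. -/
def suppS (σ : Setoid V) : Set V := {x | ∃ y, y ≠ x ∧ σ x y}

/-- The setoid with a single (possibly) non-singleton block `S`. -/
def blockS (S : Set V) : Setoid V where
  r x y := x = y ∨ (x ∈ S ∧ y ∈ S)
  iseqv := by
    refine ⟨fun x => Or.inl rfl, ?_, ?_⟩
    · rintro x y (rfl | ⟨h1, h2⟩)
      · exact Or.inl rfl
      · exact Or.inr ⟨h2, h1⟩
    · rintro x y z (rfl | ⟨h1, h2⟩) h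
      · exact h
      · rcases h with rfl | ⟨h3, h4⟩
        · exact Or.inr ⟨h1, h2⟩
        · exact Or.inr ⟨h1, h4⟩

lemma blockS_rel {S : Set V} {x y : V} : blockS S x y ↔ x = y ∨ (x ∈ S ∧ y ∈ S) := Iff.rfl

lemma suppS_blockS (σ : Setoid V) : suppS (blockS (suppS σ)) = suppS σ := by
  ext x
  constructor
  · rintro ⟨y, hyx, (rfl | ⟨h1, h2⟩)⟩
    · exact absurd rfl hyx
    · exact h1
  · rintro ⟨y, hyx, hxy⟩
    have hy : y ∈ suppS σ := ⟨x, fun h => hyx h.symm, σ.symm hxy⟩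
    exact ⟨y, hyx, Or.inr ⟨⟨y, hyx, hxy⟩, hy⟩⟩

/-- `χ_σ(P) = [σ ≤ P]`. -/
noncomputable def chi (σ : Setoid V) : EuclideanSpace ℝ (NontrivPart V) :=
  WithLp.toLp 2 (fun P : NontrivPart V => if σ ≤ P.1 then 1 else 0)

/-- The "t" operation: one block on the support. -/
def tS (σ : Setoid V) : Setoid V := blockS (suppS σ)

lemma tS_tS (σ : Setoid V) : tS (tS σ) = tS σ := by
  unfold tS; rw [suppS_blockS]

lemma suppS_tS (σ : Setoid V) : suppS (tS σ) = suppS σ := suppS_blockS σ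

/-- The global family of vectors. -/
noncomputable def cvec (σ : Setoid V) : EuclideanSpace ℝ (NontrivPart V) :=
  if tS σ = σ then chi ⊥ - chi σ else chi σ - chi (tS σ)

lemma rel_mem_suppS {σ : Setoid V} {x y : V} (h : σ x y) (hxy : x ≠ y) :
    x ∈ suppS σ ∧ y ∈ suppS σ :=
  ⟨⟨y, fun e => hxy e.symm, h⟩, ⟨x, hxy, σ.symm h⟩⟩

/-- If `restrictS A P = restrictS A Q` and `suppS σ ⊆ A` then `σ ≤ P ↔ σ ≤ Q`. -/
lemma le_iff_of_restrict_eq {A : Set V} {σ : Setoid V} (hσ : suppS σ ⊆ A)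
    {P Q : Setoid V} (h : restrictS A P = restrictS A Q) : σ ≤ P ↔ σ ≤ Q := by
  have key : ∀ {P Q : Setoid V}, restrictS A P = restrictS A Q → σ ≤ P → σ ≤ Q := by
    intro P Q h hle
    rw [Setoid.le_def] at hle ⊢
    intro x y hxy
    by_cases hxyeq : x = y
    · subst hxyeq; exact Q.refl x
    · obtain ⟨hx, hy⟩ := rel_mem_suppS hxy hxyeq
      have hrel : restrictS A P ⟨x, hσ hx⟩ ⟨y, hσ hy⟩ := hle hxy
      rw [h] at hrel
      exact hrel
  exact ⟨key h, key h.symm⟩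

lemma le_of_restrict_top {A : Set V} {σ : Setoid V} (hσ : suppS σ ⊆ A)
    {P : Setoid V} (h : restrictS A P = ⊤) : σ ≤ P := by
  rw [Setoid.le_def]
  intro x y hxy
  by_cases hxyeq : x = y
  · subst hxyeq; exact P.refl x
  · obtain ⟨hx, hy⟩ := rel_mem_suppS hxy hxyeq
    have : restrictS A P ⟨x, hσ hx⟩ ⟨y, hσ hy⟩ := by rw [h]; trivial
    exact this

/-- The characterization subspace. -/
noncomputable def Dsub (A : Set V) : Submodule ℝ (EuclideanSpace ℝ (NontrivPart V)) where
  carrier := {f | (∀ P Q : NontrivPart V, restrictS A P.1 = restrictS A Q.1 → f P = f Q) ∧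
    ∀ P : NontrivPart V, restrictS A P.1 = ⊤ → f P = 0}
  add_mem' := by
    rintro f g ⟨hf1, hf2⟩ ⟨hg1, hg2⟩
    refine ⟨fun P Q h => ?_, fun P h => ?_⟩
    · show f P + g P = f Q + g Q
      rw [hf1 P Q h, hg1 P Q h]
    · show f P + g P = 0
      rw [hf2 P h, hg2 P h, add_zero]
  zero_mem' := ⟨fun _ _ _ => rfl, fun _ _ => rfl⟩
  smul_mem' := by
    rintro a f ⟨hf1, hf2⟩
    refine ⟨fun P Q h => ?_, fun P h => ?_⟩
    · show a * f P = a * f Q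
      rw [hf1 P Q h]
    · show a * f P = 0
      rw [hf2 P h, mul_zero]

lemma mem_Dsub {A : Set V} {f : EuclideanSpace ℝ (NontrivPart V)} :
    f ∈ Dsub A ↔ (∀ P Q : NontrivPart V, restrictS A P.1 = restrictS A Q.1 → f P = f Q) ∧
      ∀ P : NontrivPart V, restrictS A P.1 = ⊤ → f P = 0 := Iff.rfl

lemma U_le_Dsub (A : Set V) : U A ≤ Dsub A := by
  rw [U, Submodule.span_le]
  rintro f ⟨π, hπ, rfl⟩
  refine ⟨fun P Q h => ?_, fun P h => ?_⟩
  · show (if restrictS A P.1 = π then (1:ℝ) else 0) = (if restrictS A Q.1 = π then 1 else 0)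
    rw [h]
  · show (if restrictS A P.1 = π then (1:ℝ) else 0) = 0
    rw [h, if_neg (fun hc => hπ hc.symm)]

lemma Dsub_le_U (A : Set V) : Dsub A ≤ U A := by
  rintro f ⟨hf1, hf2⟩
  classical
  have key : f = ∑ π ∈ Finset.univ.filter (fun π : Setoid ↥A => π ≠ ⊤),
      (if h : ∃ P : NontrivPart V, restrictS A P.1 = π then f h.choose else 0) • ind A π := by
    refine PiLp.ext fun P => ?_
    rw [WithLp.ofLp_sum, Finset.sum_apply]
    have : ∀ π ∈ Finset.univ.filter (fun π : Setoid ↥A => π ≠ ⊤),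
        ((if h : ∃ Q : NontrivPart V, restrictS A Q.1 = π then f h.choose else 0) • ind A π) P
        = if restrictS A P.1 = π then f P else 0 := by
      intro π hπ
      show (if h : ∃ Q : NontrivPart V, restrictS A Q.1 = π then f h.choose else 0) *
        (if restrictS A P.1 = π then 1 else 0) = _
      by_cases hp : restrictS A P.1 = π
      · rw [if_pos hp, if_pos hp, mul_one]
        have hex : ∃ Q : NontrivPart V, restrictS A Q.1 = π := ⟨P, hp⟩
        rw [dif_pos hex]
        exact hf1 _ _ (hex.choose_spec.trans hp.symm)
      · rw [if_neg hp, if_neg hp, mul_zero]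
    rw [Finset.sum_congr rfl this]
    by_cases htop : restrictS A P.1 = ⊤
    · rw [hf2 P htop]
      simp
    · rw [Finset.sum_ite_eq (Finset.univ.filter (fun π : Setoid ↥A => π ≠ ⊤))
        (restrictS A P.1) (fun _ => f P)]
      simp [htop]
  rw [key]
  apply Submodule.sum_mem
  intro π hπ
  rw [Finset.mem_filter] at hπ
  exact Submodule.smul_mem _ _ (Submodule.subset_span ⟨π, hπ.2, rfl⟩)

lemma chi_mem_Dsub_sub {A : Set V} {σ τ : Setoid V} (hσ : suppS σ ⊆ A) (hτ : suppS τ ⊆ A) :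
    chi σ - chi τ ∈ Dsub A := by
  refine ⟨fun P Q h => ?_, fun P h => ?_⟩
  · show chi σ P - chi τ P = chi σ Q - chi τ Q
    simp only [chi, WithLp.ofLp_toLp]
    rw [if_congr (le_iff_of_restrict_eq hσ h) rfl rfl,
      if_congr (le_iff_of_restrict_eq hτ h) rfl rfl]
  · show chi σ P - chi τ P = 0
    simp only [chi, WithLp.ofLp_toLp]
    rw [if_pos (le_of_restrict_top hσ h), if_pos (le_of_restrict_top hτ h), sub_self]

lemma suppS_bot : suppS (⊥ : Setoid V) = ∅ := by
  ext x
  simp only [suppS, Set.mem_setOf_eq, Set.mem_empty_iff_false, iff_false, not_exists]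
  rintro y ⟨hy, h⟩
  have hxy : x = y := by rwa [Setoid.bot_def] at h
  exact hy hxy.symm

lemma cvec_mem_Dsub {A : Set V} {σ : Setoid V} (hσ : suppS σ ⊆ A) : cvec σ ∈ Dsub A := by
  unfold cvec
  split
  · exact chi_mem_Dsub_sub (by rw [suppS_bot]; exact Set.empty_subset A) hσ
  · exact chi_mem_Dsub_sub hσ (by rw [suppS_tS]; exact hσ)

end Aux

section Aux2

open Classical

variable {V : Type*} [Fintype V] [DecidableEq V]

/-- Extension of a partition of `A` to `V` by singletons. -/
def extS (A : Set V) (ρ : Setoid ↥A) : Setoid V where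
  r x y := x = y ∨ ∃ (hx : x ∈ A) (hy : y ∈ A), ρ ⟨x, hx⟩ ⟨y, hy⟩
  iseqv := by
    refine ⟨fun x => Or.inl rfl, ?_, ?_⟩
    · rintro x y (rfl | ⟨hx, hy, h⟩)
      · exact Or.inl rfl
      · exact Or.inr ⟨hy, hx, ρ.symm h⟩
    · rintro x y z (rfl | ⟨hx, hy, h⟩) h2
      · exact h2
      · rcases h2 with rfl | ⟨hy', hz, h'⟩
        · exact Or.inr ⟨hx, hy, h⟩
        · exact Or.inr ⟨hx, hz, ρ.trans h h'⟩

lemma suppS_extS (A : Set V) (ρ : Setoid ↥A) : suppS (extS A ρ) ⊆ A := by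
  rintro x ⟨y, hyx, (h | ⟨hx, hy, h⟩)⟩
  · exact absurd h.symm hyx
  · exact hx

lemma extS_le_iff {A : Set V} {ρ : Setoid ↥A} {P : Setoid V} :
    extS A ρ ≤ P ↔ ρ ≤ restrictS A P := by
  constructor
  · intro h
    rw [Setoid.le_def] at h ⊢
    intro a b hab
    exact h (Or.inr ⟨a.2, b.2, hab⟩)
  · intro h
    rw [Setoid.le_def] at h ⊢
    rintro x y (rfl | ⟨hx, hy, hxy⟩)
    · exact P.refl x
    · exact h hxy

lemma ind_mem_span_chi (A : Set V) (ρ : Setoid ↥A) :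
    ind A ρ ∈ Submodule.span ℝ (Set.range fun ρ' : Setoid ↥A => chi (extS A ρ')) := by
  classical
  have hchi : ∀ ρ : Setoid ↥A, chi (extS A ρ)
      = ∑ ρ' ∈ Finset.univ.filter (fun ρ' => ρ ≤ ρ'), ind A ρ' := by
    intro ρ
    refine PiLp.ext fun P => ?_
    rw [WithLp.ofLp_sum, Finset.sum_apply]
    show (if extS A ρ ≤ P.1 then (1:ℝ) else 0)
      = ∑ ρ' ∈ Finset.univ.filter (fun ρ' => ρ ≤ ρ'), (if restrictS A P.1 = ρ' then (1:ℝ) else 0)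
    rw [Finset.sum_ite_eq (Finset.univ.filter (fun ρ' => ρ ≤ ρ')) (restrictS A P.1)
      (fun _ => (1:ℝ))]
    have : extS A ρ ≤ P.1 ↔ restrictS A P.1 ∈ Finset.univ.filter (fun ρ' => ρ ≤ ρ') := by
      rw [Finset.mem_filter]
      exact extS_le_iff.trans (by simp)
    rw [if_congr this rfl rfl]
  haveI := Finite.to_wellFoundedGT (α := Setoid ↥A)
  refine WellFoundedGT.induction
    (motive := fun ρ : Setoid ↥A =>
      ind A ρ ∈ Submodule.span ℝ (Set.range fun ρ' : Setoid ↥A => chi (extS A ρ'))) ρ ?_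
  intro ρ IH
  have hsplit : Finset.univ.filter (fun ρ' => ρ ≤ ρ')
      = insert ρ (Finset.univ.filter (fun ρ' => ρ < ρ')) := by
    ext ρ'
    simp only [Finset.mem_filter, Finset.mem_univ, true_and, Finset.mem_insert]
    constructor
    · intro h
      rcases eq_or_lt_of_le h with h | h
      · exact Or.inl h.symm
      · exact Or.inr h
    · rintro (rfl | h)
      · exact le_refl _
      · exact le_of_lt h
  have hnot : ρ ∉ Finset.univ.filter (fun ρ' => ρ < ρ') := by
    simp
  have key : ind A ρ = chi (extS A ρ)
      - ∑ ρ' ∈ Finset.univ.filter (fun ρ' => ρ < ρ'), ind A ρ' := by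
    rw [hchi ρ, hsplit, Finset.sum_insert hnot, add_sub_cancel_right]
  rw [key]
  exact sub_mem (Submodule.subset_span ⟨ρ, rfl⟩)
    (Submodule.sum_mem _ fun ρ' hρ' => IH ρ' (Finset.mem_filter.mp hρ').2)

/-- Index type for the global family. -/
def SIdx (V : Type*) := {σ : Setoid V // σ ≠ ⊥}

instance : Finite (SIdx V) := by unfold SIdx; infer_instance

noncomputable instance : Fintype (SIdx V) := Fintype.ofFinite _

/-- The global family of vectors, indexed by `SIdx`. -/
noncomputable def ccfam : SIdx V → EuclideanSpace ℝ (NontrivPart V) := fun σ => cvec σ.1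

/-- The index set corresponding to a set `A`. -/
def TIdx (A : Set V) : Set (SIdx V) := {σ | suppS σ.1 ⊆ A}

noncomputable def CC (A : Set V) : Submodule ℝ (EuclideanSpace ℝ (NontrivPart V)) :=
  Submodule.span ℝ (ccfam '' TIdx A)

lemma ne_bot_of_rel {σ : Setoid V} {x y : V} (h : σ x y) (hxy : x ≠ y) : σ ≠ ⊥ := by
  rintro rfl
  rw [Setoid.bot_def] at h
  exact hxy h

lemma exists_of_ne_bot {σ : Setoid V} (h : σ ≠ ⊥) : ∃ x y, x ≠ y ∧ σ x y := by
  by_contra hc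
  push_neg at hc
  apply h
  apply Setoid.ext
  intro x y
  rw [Setoid.bot_def]
  constructor
  · intro hxy
    by_contra hne
    exact (hc x y hne) hxy
  · rintro rfl
    exact σ.refl x

lemma tS_ne_bot {σ : Setoid V} (h : σ ≠ ⊥) : tS σ ≠ ⊥ := by
  obtain ⟨x, y, hxy, hrel⟩ := exists_of_ne_bot h
  obtain ⟨hx, hy⟩ := rel_mem_suppS hrel hxy
  exact ne_bot_of_rel (Or.inr ⟨hx, hy⟩ : tS σ x y) hxy

lemma cvec_eq_of_fixed {σ : Setoid V} (h : tS σ = σ) : cvec σ = chi ⊥ - chi σ := by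
  unfold cvec; rw [if_pos h]

lemma cvec_eq_of_not_fixed {σ : Setoid V} (h : tS σ ≠ σ) : cvec σ = chi σ - chi (tS σ) := by
  unfold cvec; rw [if_neg h]

lemma CC_le_Dsub (A : Set V) : CC A ≤ Dsub A := by
  rw [CC, Submodule.span_le]
  rintro f ⟨σ, hσ, rfl⟩
  exact cvec_mem_Dsub hσ

lemma CC_le_U (A : Set V) : CC A ≤ U A := (CC_le_Dsub A).trans (Dsub_le_U A)

lemma chi_mem_sup {A : Set V} {σ : Setoid V} (hσ : suppS σ ⊆ A) :
    chi σ ∈ CC A ⊔ (ℝ ∙ chi ⊥) := by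
  by_cases hbot : σ = ⊥
  · subst hbot
    exact Submodule.mem_sup_right (Submodule.mem_span_singleton_self _)
  by_cases hfix : tS σ = σ
  · have : chi σ = chi ⊥ - cvec σ := by rw [cvec_eq_of_fixed hfix, sub_sub_cancel]
    rw [this]
    refine sub_mem (Submodule.mem_sup_right (Submodule.mem_span_singleton_self _))
      (Submodule.mem_sup_left (Submodule.subset_span ?_))
    exact ⟨⟨σ, hbot⟩, hσ, rfl⟩
  · have h1 : cvec σ ∈ CC A := Submodule.subset_span ⟨⟨σ, hbot⟩, hσ, rfl⟩
    have h2 : cvec (tS σ) ∈ CC A := by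
      refine Submodule.subset_span ⟨⟨tS σ, tS_ne_bot hbot⟩, ?_, rfl⟩
      show suppS (tS σ) ⊆ A
      rw [suppS_tS]; exact hσ
    have : chi σ = cvec σ - cvec (tS σ) + chi ⊥ := by
      rw [cvec_eq_of_not_fixed hfix, cvec_eq_of_fixed (tS_tS σ)]
      abel
    rw [this]
    exact add_mem (sub_mem (Submodule.mem_sup_left h1) (Submodule.mem_sup_left h2))
      (Submodule.mem_sup_right (Submodule.mem_span_singleton_self _))

lemma chi_top_eq_zero : chi (⊤ : Setoid V) = 0 := by
  refine PiLp.ext fun P => ?_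
  show (if ⊤ ≤ P.1 then (1:ℝ) else 0) = 0
  rw [if_neg]
  intro h
  exact P.2 (top_le_iff.mp h)

lemma suppS_top [Nontrivial V] : suppS (⊤ : Setoid V) = Set.univ := by
  ext x
  simp only [Set.mem_univ, iff_true]
  obtain ⟨y, hy⟩ := exists_ne x
  exact ⟨y, hy, trivial⟩

lemma tS_top [Nontrivial V] : tS (⊤ : Setoid V) = ⊤ := by
  rw [Setoid.eq_top_iff]
  intro x y
  by_cases h : x = y
  · exact Or.inl h
  · refine Or.inr ⟨?_, ?_⟩ <;> · rw [suppS_top]; trivial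

lemma top_ne_bot_setoid [Nontrivial V] : (⊤ : Setoid V) ≠ (⊥ : Setoid V) := by
  obtain ⟨x, y, hxy⟩ := exists_pair_ne V
  intro h
  have : (⊤ : Setoid V) x y := trivial
  rw [h, Setoid.bot_def] at this
  exact hxy this

lemma cvec_top [Nontrivial V] : cvec (⊤ : Setoid V) = chi ⊥ := by
  rw [cvec_eq_of_fixed tS_top, chi_top_eq_zero, sub_zero]

lemma U_le_CC [Nontrivial V] (A : Set V) : U A ≤ CC A := by
  rw [U, Submodule.span_le]
  rintro f ⟨π, hπ, rfl⟩
  have h1 : ind A π ∈ CC A ⊔ (ℝ ∙ chi ⊥) := by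
    refine Submodule.span_le.mpr ?_ (ind_mem_span_chi A π)
    rintro g ⟨ρ', rfl⟩
    exact chi_mem_sup (suppS_extS A ρ')
  by_cases hA : ∀ x, x ∈ A
  · have : (ℝ ∙ chi (⊥ : Setoid V)) ≤ CC A := by
      rw [Submodule.span_singleton_le_iff_mem, ← cvec_top]
      exact Submodule.subset_span ⟨⟨⊤, top_ne_bot_setoid⟩, fun x _ => hA x, rfl⟩
    exact (sup_le le_rfl this) h1
  · push_neg at hA
    obtain ⟨v, hv⟩ := hA
    have hblock : blockS A ≠ ⊤ := by
      intro h
      obtain ⟨u, hu⟩ := exists_ne v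
      have : blockS A v u := by rw [h]; trivial
      rcases this with h' | ⟨h', _⟩
      · exact hu h'.symm
      · exact hv h'
    set P₀ : NontrivPart V := ⟨blockS A, hblock⟩ with hP₀
    have hrest : restrictS A P₀.1 = ⊤ := by
      rw [Setoid.eq_top_iff]
      intro a b
      exact (Or.inr ⟨a.2, b.2⟩ : blockS A a.1 b.1)
    rw [Submodule.mem_sup] at h1
    obtain ⟨y, hy, z, hz, hsum⟩ := h1
    obtain ⟨r, hr⟩ := Submodule.mem_span_singleton.mp hz
    have hval := congrArg (fun v => v P₀) hsum
    have hy0 : y P₀ = 0 := ((CC_le_Dsub A) hy).2 P₀ hrest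
    have hind0 : ind A π P₀ = 0 := by
      show (if restrictS A P₀.1 = π then (1:ℝ) else 0) = 0
      rw [if_neg]
      rw [hrest]
      exact fun h => hπ h.symm
    have hz0 : z P₀ = r := by
      rw [← hr]
      show r * (if ⊥ ≤ P₀.1 then (1:ℝ) else 0) = r
      rw [if_pos bot_le, mul_one]
    have hr0 : r = 0 := by
      have : y P₀ + z P₀ = ind A π P₀ := hval
      rw [hy0, hz0, hind0, zero_add] at this
      exact this
    have hz' : z = 0 := by rw [← hr, hr0, zero_smul]
    rw [← hsum, hz', add_zero]
    exact hy

lemma U_eq_CC [Nontrivial V] (A : Set V) : U A = CC A :=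
  le_antisymm (U_le_CC A) (CC_le_U A)

end Aux2

section Aux3

open Classical

variable {V : Type*} [Fintype V] [DecidableEq V]

lemma restrict_univ_inj {P Q : Setoid V}
    (h : restrictS Set.univ P = restrictS Set.univ Q) : P = Q := by
  apply Setoid.ext
  intro x y
  have := Setoid.ext_iff.mp h ⟨x, trivial⟩ ⟨y, trivial⟩
  exact this

lemma restrict_univ_top {P : Setoid V} (h : restrictS Set.univ P = ⊤) : P = ⊤ := by
  rw [Setoid.eq_top_iff]
  intro x y
  have := Setoid.ext_iff.mp h ⟨x, trivial⟩ ⟨y, trivial⟩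
  exact this.mpr trivial

lemma top_le_Dsub_univ : ⊤ ≤ Dsub (Set.univ : Set V) := by
  intro f _
  refine ⟨fun P Q h => ?_, fun P h => ?_⟩
  · rw [Subtype.ext (restrict_univ_inj h)]
  · exact absurd (restrict_univ_top h) P.2

lemma TIdx_univ : TIdx (Set.univ : Set V) = Set.univ := by
  ext σ
  simp only [TIdx, Set.mem_setOf_eq, Set.mem_univ, iff_true]
  exact Set.subset_univ _

lemma li_ccfam [Nontrivial V] : LinearIndependent ℝ (ccfam : SIdx V → _) := by
  apply linearIndependent_of_top_le_span_of_card_eq_finrank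
  · have h1 : ⊤ ≤ CC (Set.univ : Set V) :=
      le_trans (le_trans top_le_Dsub_univ (Dsub_le_U _)) (U_le_CC _)
    rw [CC, TIdx_univ, Set.image_univ] at h1
    exact h1
  · rw [finrank_euclideanSpace]
    refine Fintype.card_congr ?_
    have e1 : SIdx V ≃ {σ : Setoid V // σ ≠ ⊥} := Equiv.refl _
    have e2 : {σ : Setoid V // σ ≠ ⊤} ≃ NontrivPart V := Equiv.refl _
    refine e1.trans (Equiv.trans ?_ e2)
    refine Equiv.subtypeEquiv (Equiv.swap (⊥ : Setoid V) ⊤) ?_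
    intro σ
    constructor
    · intro h hc
      apply h
      have := congrArg (Equiv.swap (⊥ : Setoid V) ⊤) hc
      simpa using (Equiv.swap (⊥ : Setoid V) ⊤).injective (by simpa using hc)
    · intro h hc
      subst hc
      simp at h

lemma span_image_inf {ι' : Type*} {v : ι' → EuclideanSpace ℝ (NontrivPart V)}
    (hv : LinearIndependent ℝ v) (s t : Set ι') :
    Submodule.span ℝ (v '' s) ⊓ Submodule.span ℝ (v '' t)
      = Submodule.span ℝ (v '' (s ∩ t)) := by
  refine le_antisymm ?_ (le_inf (Submodule.span_mono (Set.image_mono Set.inter_subset_left))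
    (Submodule.span_mono (Set.image_mono Set.inter_subset_right)))
  rintro x ⟨hxs, hxt⟩
  obtain ⟨l, hl, hlx⟩ := (Finsupp.mem_span_image_iff_linearCombination ℝ).mp hxs
  obtain ⟨m, hm, hmx⟩ := (Finsupp.mem_span_image_iff_linearCombination ℝ).mp hxt
  have hlm : l = m := hv (by rw [hlx, hmx])
  refine (Finsupp.mem_span_image_iff_linearCombination ℝ).mpr ⟨l, ?_, hlx⟩
  rw [Finsupp.mem_supported] at hl hm ⊢
  rw [Set.subset_inter_iff]
  exact ⟨hl, hlm ▸ hm⟩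

lemma Col_eq_span [Nontrivial V] (E : Set (Set V)) :
    Col E = Submodule.span ℝ (ccfam '' ⋃ e ∈ E, TIdx e) := by
  have h1 : Col E = ⨆ e ∈ E, CC e := by
    unfold Col
    exact iSup_congr fun e => iSup_congr fun _ => U_eq_CC e
  rw [h1, Set.image_iUnion₂, Submodule.span_iUnion₂]
  rfl

lemma index_inter (Ea Eb : Set (Set V)) :
    (⋃ e ∈ Ea, TIdx e) ∩ (⋃ f ∈ Eb, TIdx f)
      = ⋃ g ∈ {g : Set V | ∃ e ∈ Ea, ∃ f ∈ Eb, g = e ∩ f ∧ 2 ≤ Nat.card ↥(e ∩ f)},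
          TIdx (g : Set V) := by
  ext σ
  simp only [Set.mem_inter_iff, Set.mem_iUnion, Set.mem_setOf_eq]
  constructor
  · rintro ⟨⟨e, he, hσe⟩, ⟨f, hf, hσf⟩⟩
    have hsub : suppS σ.1 ⊆ e ∩ f := Set.subset_inter hσe hσf
    obtain ⟨x, y, hxy, hrel⟩ := exists_of_ne_bot σ.2
    obtain ⟨hx, hy⟩ := rel_mem_suppS hrel hxy
    have hcard : 2 ≤ Nat.card ↥(e ∩ f) := by
      rw [Nat.card_coe_set_eq]
      have : 1 < (e ∩ f).ncard := by
        rw [Set.one_lt_ncard (Set.toFinite _)]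
        exact ⟨x, hsub hx, y, hsub hy, hxy⟩
      omega
    exact ⟨e ∩ f, ⟨e, he, f, hf, rfl, hcard⟩, hsub⟩
  · rintro ⟨g, ⟨e, he, f, hf, rfl, hcard⟩, hσg⟩
    exact ⟨⟨e, he, hσg.trans Set.inter_subset_left⟩,
      ⟨f, hf, hσg.trans Set.inter_subset_right⟩⟩

end Aux3

/-- `Col(H_a) ∩ Col(H_b) = Col(H_{a∧b})`, where `H_{a∧b}` has edge set
`{e ∩ f : e ∈ E_a, f ∈ E_b, |e ∩ f| ≥ 2}`; consequently
`Col(H_{a∧b})^⊥ = Col(H_a)^⊥ + Col(H_b)^⊥`. -/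
theorem stmt16 (Ea Eb : Set (Set V)) :
    Col Ea ⊓ Col Eb =
      Col {g : Set V | ∃ e ∈ Ea, ∃ f ∈ Eb, g = e ∩ f ∧ 2 ≤ Nat.card ↥(e ∩ f)} ∧
    (Col {g : Set V | ∃ e ∈ Ea, ∃ f ∈ Eb, g = e ∩ f ∧ 2 ≤ Nat.card ↥(e ∩ f)})ᗮ =
      (Col Ea)ᗮ ⊔ (Col Eb)ᗮ := by
  by_cases hV : Nontrivial V
  case neg =>
    have hsub : Subsingleton V := not_nontrivial_iff_subsingleton.mp hV
    have hempty : IsEmpty (NontrivPart V) := by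
      constructor
      rintro ⟨P, hP⟩
      apply hP
      rw [Setoid.eq_top_iff]
      intro x y
      rw [Subsingleton.elim x y]
    have hzero : ∀ x : EuclideanSpace ℝ (NontrivPart V), x = 0 :=
      fun x => PiLp.ext fun P => hempty.elim P
    have hall : ∀ p q : Submodule ℝ (EuclideanSpace ℝ (NontrivPart V)), p = q := by
      intro p q
      ext x
      rw [hzero x]
      simp
    exact ⟨hall _ _, hall _ _⟩
  case pos =>
    have h1 : Col Ea ⊓ Col Eb =
        Col {g : Set V | ∃ e ∈ Ea, ∃ f ∈ Eb, g = e ∩ f ∧ 2 ≤ Nat.card ↥(e ∩ f)} := by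
      rw [Col_eq_span Ea, Col_eq_span Eb, Col_eq_span, span_image_inf li_ccfam,
        index_inter Ea Eb]
    refine ⟨h1, ?_⟩
    rw [← h1]
    have hX := Submodule.orthogonal_orthogonal (Col Ea)
    have hY := Submodule.orthogonal_orthogonal (Col Eb)
    calc (Col Ea ⊓ Col Eb)ᗮ
        = ((Col Ea)ᗮᗮ ⊓ (Col Eb)ᗮᗮ)ᗮ := by rw [hX, hY]
      _ = (((Col Ea)ᗮ ⊔ (Col Eb)ᗮ)ᗮ)ᗮ := by rw [Submodule.inf_orthogonal]
      _ = (Col Ea)ᗮ ⊔ (Col Eb)ᗮ := Submodule.orthogonal_orthogonal _
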